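/- arXiv:2208.04281 — 5 statements merged into one kernel-verified Lean document; each statement's English description precedes it below -/
import Mathlib

section
/- A triple (x,y,z) of n×n complex matrices, acting as a Lie algebra element on ℂ^n⊗ℂ^n⊗ℂ^n via (x,y,z).(a⊗b⊗c) = x(a)⊗b⊗c + a⊗y(b)⊗c + a⊗b⊗z(c), annihilates the unit tensor M_⟨1⟩^⊕n if and only if x, y, z are all diagonal matrices and x + y + z = 0. -/
open scoped BigOperators

/-- The unit tensor `M⟨1⟩^⊕n = Σ eᵢ⊗eᵢ⊗eᵢ` in coordinates. -/
noncomputable def unitTensor (n : ℕ) : Fin n → Fin n → Fin n → ℂ :=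
  fun i j k => if i = j ∧ j = k then 1 else 0

/-- The derivation (Lie algebra) action of a triple of matrices on a tensor:
`(x,y,z).(a⊗b⊗c) = xa⊗b⊗c + a⊗yb⊗c + a⊗b⊗zc`. -/
noncomputable def lieAct {n : ℕ} (x y z : Matrix (Fin n) (Fin n) ℂ)
    (T : Fin n → Fin n → Fin n → ℂ) : Fin n → Fin n → Fin n → ℂ :=
  fun i j k => (∑ l, x i l * T l j k) + (∑ l, y j l * T i l k) + (∑ l, z k l * T i j l)

lemma lieAct_unitTensor_apply {n : ℕ} (x y z : Matrix (Fin n) (Fin n) ℂ) (i j k : Fin n) :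
    lieAct x y z (unitTensor n) i j k =
      (if j = k then x i j else 0) + (if i = k then y j i else 0) +
        (if i = j then z k i else 0) := by
  have h1 : (∑ l, x i l * (if l = j ∧ j = k then (1:ℂ) else 0)) =
      if j = k then x i j else 0 := by
    by_cases h : j = k
    · subst h; simp
    · simp [h]
  have h2 : (∑ l, y j l * (if i = l ∧ l = k then (1:ℂ) else 0)) =
      if i = k then y j i else 0 := by
    by_cases h : i = k
    · subst h
      have : ∀ l : Fin n, (i = l ∧ l = i) ↔ l = i := fun l => by
        constructor
        · rintro ⟨rfl, _⟩; rfl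
        · rintro rfl; exact ⟨rfl, rfl⟩
      simp [this]
    · simp only [if_neg h]
      refine Finset.sum_eq_zero fun l _ => ?_
      rcases eq_or_ne i l with rfl | hl
      · simp [h]
      · simp [hl]
  have h3 : (∑ l, z k l * (if i = j ∧ j = l then (1:ℂ) else 0)) =
      if i = j then z k i else 0 := by
    by_cases h : i = j
    · subst h
      have : ∀ l : Fin n, (i = i ∧ i = l) ↔ l = i := fun l => by
        constructor
        · rintro ⟨_, rfl⟩; rfl
        · rintro rfl; exact ⟨rfl, rfl⟩
      simp [this]
    · simp [h]
  simp only [lieAct, unitTensor]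
  rw [h1, h2, h3]

/-- `(x,y,z)` annihilates the unit tensor iff `x, y, z` are diagonal and `x + y + z = 0`. -/
theorem lieAct_unitTensor_eq_zero_iff {n : ℕ} (x y z : Matrix (Fin n) (Fin n) ℂ) :
    lieAct x y z (unitTensor n) = 0 ↔
      x.IsDiag ∧ y.IsDiag ∧ z.IsDiag ∧ x + y + z = 0 := by
  constructor
  · intro h
    have key : ∀ i j k : Fin n,
        (if j = k then x i j else 0) + (if i = k then y j i else 0) +
          (if i = j then z k i else 0) = 0 := by
      intro i j k
      rw [← lieAct_unitTensor_apply]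
      exact congrFun (congrFun (congrFun h i) j) k
    have hx : x.IsDiag := by
      intro i j hij
      have := key i j j
      simpa [if_neg hij] using this
    have hy : y.IsDiag := by
      intro i j hij
      have := key j i j
      simpa [hij, (Ne.symm hij : j ≠ i)] using this
    have hz : z.IsDiag := by
      intro i j hij
      have := key j j i
      simpa [if_neg (Ne.symm hij)] using this
    refine ⟨hx, hy, hz, ?_⟩
    ext i j
    by_cases hij : i = j
    · subst hij
      simpa using key i i i
    · simp [Matrix.add_apply, hx hij, hy hij, hz hij]
  · rintro ⟨hx, hy, hz, hsum⟩
    funext i j k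
    rw [lieAct_unitTensor_apply]
    have hsum' : ∀ i : Fin n, x i i + y i i + z i i = 0 := fun i => by
      have := congrFun (congrFun hsum i) i
      simpa [Matrix.add_apply] using this
    simp only [Pi.zero_apply]
    by_cases hij : i = j
    · subst hij
      by_cases hik : i = k
      · subst hik
        simpa using hsum' i
      · simp [hik, hx (fun h => hik h.symm), hz fun h => hik h.symm]
    · by_cases hjk : j = k
      · subst hjk
        simp [hij, hx hij]
      · by_cases hik : i = k
        · subst hik
          simp [hij, hjk, hy fun h => hij h.symm]
        · simp [hij, hjk, hik]
end

section
/- If (f,g,h) ∈ GL(A)×GL(B)×GL(C) fixes the unit tensor M_⟨1⟩^⊕n, then there exist a permutation σ ∈ S_n and nonzero scalars λ_1,…,λ_n, μ_1,…,μ_n, ν_1,…,ν_n with λ_iμ_iν_i = 1 for all i, such that f(a_i) = λ_i a_{σ(i)}, g(b_i) = μ_i b_{σ(i)}, and h(c_i) = ν_i c_{σ(i)} for all i. -/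
open scoped BigOperators

lemma third_structure {n : ℕ} (f g h : Matrix (Fin n) (Fin n) ℂ)
    (hf : IsUnit f) (hg : IsUnit g) (hh : IsUnit h)
    (heq : ∀ i j k, ∑ m, f i m * g j m * h k m = if i = j ∧ j = k then 1 else 0) :
    ∃ (σ : Equiv.Perm (Fin n)) (nu : Fin n → ℂ),
      (∀ i, nu i ≠ 0) ∧ (∀ i j, h j i = if j = σ i then nu i else 0) := by
  have hfd : IsUnit f.det := (Matrix.isUnit_iff_isUnit_det f).mp hf
  have hgd : IsUnit g.transpose.det := by
    rw [Matrix.det_transpose]; exact (Matrix.isUnit_iff_isUnit_det g).mp hg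
  have hhd : IsUnit h.det := (Matrix.isUnit_iff_isUnit_det h).mp hh
  -- matrix identity
  have hmat : ∀ k, f * Matrix.diagonal (fun m => h k m) * g.transpose
      = Matrix.single k k 1 := by
    intro k
    ext i j
    have e1 : (f * Matrix.diagonal (fun m => h k m) * g.transpose) i j
        = ∑ m, f i m * g j m * h k m := by
      simp [Matrix.mul_apply, Matrix.diagonal_apply, Finset.sum_ite_eq,
        Finset.mul_sum, Finset.sum_mul, mul_comm, mul_assoc, mul_left_comm]
    rw [e1, heq i j k]
    have hiff : (i = j ∧ j = k) ↔ (k = i ∧ k = j) := by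
      constructor
      · rintro ⟨rfl, rfl⟩; exact ⟨rfl, rfl⟩
      · rintro ⟨rfl, rfl⟩; exact ⟨rfl, rfl⟩
    simp [Matrix.single, hiff]
  have hD : ∀ k, Matrix.diagonal (fun m => h k m)
      = f⁻¹ * Matrix.single k k 1 * g.transpose⁻¹ := by
    intro k
    have := congrArg (fun M => f⁻¹ * M * g.transpose⁻¹) (hmat k)
    beta_reduce at this
    rw [← this]
    rw [show f⁻¹ * (f * Matrix.diagonal (fun m => h k m) * g.transpose) * g.transpose⁻¹
        = (f⁻¹ * f) * Matrix.diagonal (fun m => h k m) * (g.transpose * g.transpose⁻¹) by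
      simp only [Matrix.mul_assoc]]
    rw [Matrix.nonsing_inv_mul f hfd, Matrix.mul_nonsing_inv _ hgd, Matrix.one_mul,
      Matrix.mul_one]
  have hentry : ∀ k m m', Matrix.diagonal (fun m => h k m) m m'
      = f⁻¹ m k * g.transpose⁻¹ k m' := by
    intro k m m'
    rw [hD k]
    simp [Matrix.mul_apply, Matrix.single, Finset.sum_ite_eq, ite_and,
      Finset.mul_sum, Finset.sum_mul]
  have hprod : ∀ k m m', m ≠ m' → h k m * h k m' = 0 := by
    intro k m m' hmm
    have e1 : h k m = f⁻¹ m k * g.transpose⁻¹ k m := by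
      have := hentry k m m; rwa [Matrix.diagonal_apply_eq] at this
    have e2 : h k m' = f⁻¹ m' k * g.transpose⁻¹ k m' := by
      have := hentry k m' m'; rwa [Matrix.diagonal_apply_eq] at this
    have e3 : (0 : ℂ) = f⁻¹ m k * g.transpose⁻¹ k m' := by
      have := hentry k m m'; rwa [Matrix.diagonal_apply_ne _ hmm] at this
    calc h k m * h k m' = (f⁻¹ m k * g.transpose⁻¹ k m') * (f⁻¹ m' k * g.transpose⁻¹ k m) := by
          rw [e1, e2]; ring
      _ = 0 := by rw [← e3, zero_mul]
  -- each row has a nonzero entry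
  have hrow : ∀ k, ∃ m, h k m ≠ 0 := by
    intro k
    by_contra hcon
    push_neg at hcon
    have h1 : (h * h⁻¹) k k = 0 := by
      simp [Matrix.mul_apply, hcon]
    rw [Matrix.mul_nonsing_inv h hhd] at h1
    simp at h1
  choose τ hτ using hrow
  have huniq : ∀ k m, h k m ≠ 0 → m = τ k := by
    intro k m hm
    by_contra hne
    exact hm (mul_eq_zero.mp (hprod k m (τ k) hne) |>.resolve_right (hτ k))
  have hzero : ∀ k m, m ≠ τ k → h k m = 0 := by
    intro k m hne
    by_contra hc
    exact hne (huniq k m hc)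
  have hsingle : ∀ k k', (h * h⁻¹) k k' = h k (τ k) * h⁻¹ (τ k) k' := by
    intro k k'
    rw [Matrix.mul_apply]
    exact Finset.sum_eq_single (τ k) (fun m _ hm => by rw [hzero k m hm, zero_mul])
      (fun hab => absurd (Finset.mem_univ _) hab)
  have hinj : Function.Injective τ := by
    intro k k' hkk'
    by_contra hne
    have h1 : h k (τ k) * h⁻¹ (τ k) k' = 0 := by
      rw [← hsingle, Matrix.mul_nonsing_inv h hhd, Matrix.one_apply_ne hne]
    have h2 : h⁻¹ (τ k) k' = 0 := (mul_eq_zero.mp h1).resolve_left (hτ k)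
    have h3 : h k' (τ k') * h⁻¹ (τ k') k' = 1 := by
      rw [← hsingle, Matrix.mul_nonsing_inv h hhd, Matrix.one_apply_eq]
    rw [hkk'] at h2
    rw [h2, mul_zero] at h3
    exact one_ne_zero h3.symm
  have hbij : Function.Bijective τ := Finite.injective_iff_bijective.mp hinj
  let e := Equiv.ofBijective τ hbij
  refine ⟨e.symm, fun i => h (e.symm i) i, ?_, ?_⟩
  · intro i
    have h1 := hτ (e.symm i)
    have h2 : τ (e.symm i) = i := e.apply_symm_apply i
    rw [h2] at h1
    exact h1
  · intro i j
    by_cases hc : j = e.symm i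
    · rw [if_pos hc, hc]
    · rw [if_neg hc]
      apply hzero
      intro hit
      exact hc (by rw [hit]; exact (e.symm_apply_apply j).symm)

/-- The factorwise action of a triple of matrices on a tensor. -/
noncomputable def actT {n : ℕ} (f g h : Matrix (Fin n) (Fin n) ℂ)
    (T : Fin n → Fin n → Fin n → ℂ) : Fin n → Fin n → Fin n → ℂ :=
  fun i j k => ∑ i', ∑ j', ∑ k', f i i' * g j j' * h k k' * T i' j' k'

/-- If `(f,g,h) ∈ GL×GL×GL` fixes the unit tensor, then there are a permutation `σ` and
nonzero scalars `λᵢ, μᵢ, νᵢ` with `λᵢμᵢνᵢ = 1` such that `f(aᵢ) = λᵢ a_{σ(i)}`,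
`g(bᵢ) = μᵢ b_{σ(i)}`, `h(cᵢ) = νᵢ c_{σ(i)}`. -/
theorem stabilizer_unitTensor_structure {n : ℕ} (f g h : Matrix (Fin n) (Fin n) ℂ)
    (hf : IsUnit f) (hg : IsUnit g) (hh : IsUnit h)
    (hfix : actT f g h (unitTensor n) = unitTensor n) :
    ∃ (σ : Equiv.Perm (Fin n)) (lam mu nu : Fin n → ℂ),
      (∀ i, lam i ≠ 0) ∧ (∀ i, mu i ≠ 0) ∧ (∀ i, nu i ≠ 0) ∧
      (∀ i, lam i * mu i * nu i = 1) ∧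
      (∀ i j, f j i = if j = σ i then lam i else 0) ∧
      (∀ i j, g j i = if j = σ i then mu i else 0) ∧
      (∀ i j, h j i = if j = σ i then nu i else 0) := by
  have heq : ∀ i j k, ∑ m, f i m * g j m * h k m = if i = j ∧ j = k then 1 else 0 := by
    intro i j k
    have hc := congrFun (congrFun (congrFun hfix i) j) k
    simp only [actT, unitTensor, mul_ite, mul_one, mul_zero] at hc
    rw [← hc]
    apply Finset.sum_congr rfl
    intro m _
    rw [Finset.sum_eq_single m, Finset.sum_eq_single m]
    · simp
    · intro b _ hb; rw [if_neg (fun hab => hb hab.2.symm)]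
    · intro hb; exact absurd (Finset.mem_univ _) hb
    · intro b _ hb
      rw [Finset.sum_eq_zero]
      intro c _
      rw [if_neg (fun hab => hb hab.1.symm)]
    · intro hb; exact absurd (Finset.mem_univ _) hb
  have hsym : ∀ (i j k : Fin n), (i = j ∧ j = k) ↔ (j = k ∧ k = i) := by
    intro i j k
    constructor
    · rintro ⟨rfl, rfl⟩; exact ⟨rfl, rfl⟩
    · rintro ⟨rfl, rfl⟩; exact ⟨rfl, rfl⟩
  have heqf : ∀ i j k, ∑ m, g i m * h j m * f k m = if i = j ∧ j = k then 1 else 0 := by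
    intro i j k
    rw [show (∑ m, g i m * h j m * f k m) = ∑ m, f k m * g i m * h j m from
      Finset.sum_congr rfl (fun m _ => by ring), heq k i j]
    simp [hsym k i j]
  have heqg : ∀ i j k, ∑ m, h i m * f j m * g k m = if i = j ∧ j = k then 1 else 0 := by
    intro i j k
    rw [show (∑ m, h i m * f j m * g k m) = ∑ m, f j m * g k m * h i m from
      Finset.sum_congr rfl (fun m _ => by ring), heq j k i]
    simp [← hsym i j k]
  obtain ⟨σ3, nu, hnu, hhh⟩ := third_structure f g h hf hg hh heq
  obtain ⟨σ1, lam, hlam, hff⟩ := third_structure g h f hg hh hf heqf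
  obtain ⟨σ2, mu, hmu, hgg⟩ := third_structure h f g hh hf hg heqg
  have key : ∀ m : Fin n, σ1 m = σ2 m ∧ σ2 m = σ3 m ∧ lam m * mu m * nu m = 1 := by
    intro m
    have hc := heq (σ1 m) (σ2 m) (σ3 m)
    rw [Finset.sum_eq_single m] at hc
    · rw [hff m (σ1 m), hgg m (σ2 m), hhh m (σ3 m), if_pos rfl, if_pos rfl, if_pos rfl] at hc
      have hne : lam m * mu m * nu m ≠ 0 :=
        mul_ne_zero (mul_ne_zero (hlam m) (hmu m)) (hnu m)
      by_cases hcond : σ1 m = σ2 m ∧ σ2 m = σ3 m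
      · rw [if_pos hcond] at hc
        exact ⟨hcond.1, hcond.2, hc⟩
      · rw [if_neg hcond] at hc
        exact absurd hc hne
    · intro b _ hb
      rw [hff b (σ1 m), if_neg (fun hab => hb (σ1.injective hab.symm))]
      ring
    · intro hb; exact absurd (Finset.mem_univ _) hb
  refine ⟨σ1, lam, mu, nu, hlam, hmu, hnu, fun m => (key m).2.2, fun i j => hff i j, ?_, ?_⟩
  · intro i j
    rw [hgg i j, (key i).1]
  · intro i j
    rw [hhh i j, ← (key i).2.1, (key i).1]
end

section
/- The stabilizer of the unit tensor M_⟨1⟩^⊕n in GL_n(ℂ)×GL_n(ℂ)×GL_n(ℂ) is the semidirect product S_n ⋉ T̃, where S_n acts by simultaneous permutation matrices in all three factors and T̃ = {(λ,μ,ν) : λ,μ,ν diagonal invertible with λμν = Id}; in particular T̃ is a normal subgroup of the stabilizer and every stabilizer element factors uniquely as a permutation element times an element of T̃. -/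
open scoped BigOperators

/-- The permutation matrix of `σ`: `P_σ eⱼ = e_{σ(j)}`. -/
noncomputable def permMat {n : ℕ} (σ : Equiv.Perm (Fin n)) : Matrix (Fin n) (Fin n) ℂ :=
  fun i j => if i = σ j then 1 else 0

/-- Membership in the torus `T̃` of triples of invertible diagonal matrices with product `Id`,
recorded via their diagonals. -/
def memTorus {n : ℕ} (f g h : Matrix (Fin n) (Fin n) ℂ) : Prop :=
  ∃ lam mu nu : Fin n → ℂ, (∀ i, lam i * mu i * nu i = 1) ∧
    f = Matrix.diagonal lam ∧ g = Matrix.diagonal mu ∧ h = Matrix.diagonal nu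

/-- The stabilizer of the unit tensor in `GL_n(ℂ)³` is the semidirect product `S_n ⋉ T̃`:
every stabilizer element factors uniquely as a simultaneous permutation times an element
of `T̃`, and `T̃` is normal in the stabilizer. -/
theorem stabilizer_unitTensor_semidirect {n : ℕ} (f g h : Matrix (Fin n) (Fin n) ℂ)
    (hf : IsUnit f) (hg : IsUnit g) (hh : IsUnit h)
    (hfix : actT f g h (unitTensor n) = unitTensor n) :
    (∃! q : Equiv.Perm (Fin n) × (Fin n → ℂ) × (Fin n → ℂ) × (Fin n → ℂ),
      (∀ i, q.2.1 i * q.2.2.1 i * q.2.2.2 i = 1) ∧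
      f = permMat q.1 * Matrix.diagonal q.2.1 ∧
      g = permMat q.1 * Matrix.diagonal q.2.2.1 ∧
      h = permMat q.1 * Matrix.diagonal q.2.2.2) ∧
    (∀ d₁ d₂ d₃ : Matrix (Fin n) (Fin n) ℂ, memTorus d₁ d₂ d₃ →
      memTorus (f * d₁ * f⁻¹) (g * d₂ * g⁻¹) (h * d₃ * h⁻¹)) := by
  -- basic facts
  have hinv : ∀ (M : Matrix (Fin n) (Fin n) ℂ), IsUnit M → ∀ v : Fin n → ℂ,
      M.mulVec v = 0 → v = 0 := by
    intro M hM v hv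
    have h1 : M⁻¹ * M = 1 := Matrix.nonsing_inv_mul M ((Matrix.isUnit_iff_isUnit_det M).mp hM)
    calc v = (M⁻¹ * M).mulVec v := by rw [h1, Matrix.one_mulVec]
      _ = M⁻¹.mulVec (M.mulVec v) := by rw [Matrix.mulVec_mulVec]
      _ = 0 := by rw [hv, Matrix.mulVec_zero]
  have key : ∀ i j k : Fin n, (∑ t, f i t * g j t * h k t)
      = if i = j ∧ j = k then 1 else 0 := by
    intro i j k
    have := congrFun (congrFun (congrFun hfix i) j) k
    simpa [actT, unitTensor, mul_ite, mul_zero, mul_one, ite_and,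
      Finset.sum_ite_eq, Finset.sum_ite_eq'] using this
  have step2a : ∀ i j : Fin n, i ≠ j → ∀ t, f i t * g j t = 0 := by
    intro i j hij t
    have hz : h.mulVec (fun t => f i t * g j t) = 0 := by
      funext k
      have hk := key i j k
      rw [if_neg (by tauto)] at hk
      show h.mulVec (fun t => f i t * g j t) k = (0:ℂ)
      rw [← hk]
      simp only [Matrix.mulVec, dotProduct]
      exact Finset.sum_congr rfl fun t _ => by ring
    exact congrFun (hinv h hh _ hz) t
  have step2b : ∀ j k : Fin n, j ≠ k → ∀ t, g j t * h k t = 0 := by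
    intro j k hjk t
    have hz : f.mulVec (fun t => g j t * h k t) = 0 := by
      funext i
      have hk := key i j k
      rw [if_neg (by tauto)] at hk
      show f.mulVec (fun t => g j t * h k t) i = (0:ℂ)
      rw [← hk]
      simp only [Matrix.mulVec, dotProduct]
      exact Finset.sum_congr rfl fun t _ => by ring
    exact congrFun (hinv f hf _ hz) t
  have col : ∀ (M : Matrix (Fin n) (Fin n) ℂ), IsUnit M → ∀ t, ∃ i, M i t ≠ 0 := by
    intro M hM t
    by_contra hc
    push_neg at hc
    have hz : M.mulVec (Pi.single t 1) = 0 := by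
      rw [Matrix.mulVec_single]
      funext i; simp [hc i]
    have := congrFun (hinv M hM _ hz) t
    simp at this
  -- the support function
  have hex : ∀ t : Fin n, ∃ i, f i t ≠ 0 := col f hf
  set s : Fin n → Fin n := fun t => (hex t).choose with hs_def
  have hfs : ∀ t, f (s t) t ≠ 0 := fun t => (hex t).choose_spec
  have hgs : ∀ t, g (s t) t ≠ 0 := by
    intro t
    obtain ⟨j, hj⟩ := col g hg t
    rcases eq_or_ne (s t) j with rfl | hne
    · exact hj
    · exact absurd ((mul_eq_zero.mp (step2a _ _ hne t)).resolve_left (hfs t)) hj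
  have hhs : ∀ t, h (s t) t ≠ 0 := by
    intro t
    obtain ⟨k, hk⟩ := col h hh t
    rcases eq_or_ne (s t) k with rfl | hne
    · exact hk
    · exact (hk ((mul_eq_zero.mp (step2b _ _ hne t)).resolve_left (hgs t))).elim
  have hf0 : ∀ i t, i ≠ s t → f i t = 0 := fun i t hne =>
    (mul_eq_zero.mp (step2a i (s t) hne t)).resolve_right (hgs t)
  have hg0 : ∀ i t, i ≠ s t → g i t = 0 := fun i t hne =>
    (mul_eq_zero.mp (step2a (s t) i (Ne.symm hne) t)).resolve_left (hfs t)
  have hh0 : ∀ i t, i ≠ s t → h i t = 0 := fun i t hne =>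
    (mul_eq_zero.mp (step2b (s t) i (Ne.symm hne) t)).resolve_left (hgs t)
  -- injectivity
  have sinj : Function.Injective s := by
    intro t t' hst
    by_contra hne
    have hv : f.mulVec (Pi.single t (f (s t) t') - Pi.single t' (f (s t) t)) = 0 := by
      rw [Matrix.mulVec_sub, Matrix.mulVec_single, Matrix.mulVec_single]
      funext i
      rcases eq_or_ne i (s t) with rfl | hi
      · simp [mul_comm]
      · have h1 : f i t = 0 := hf0 i t hi
        have h2 : f i t' = 0 := hf0 i t' (hst ▸ hi)
        simp [h1, h2]
    have := congrFun (hinv f hf _ hv) t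
    simp [Pi.single_apply, hne, Ne.symm hne] at this
    exact (hst ▸ hfs t') this
  have sbij : Function.Bijective s := Finite.injective_iff_bijective.mp sinj
  set σ : Equiv.Perm (Fin n) := Equiv.ofBijective s sbij with hσ_def
  have hσ : ∀ t, σ t = s t := fun t => rfl
  set lam : Fin n → ℂ := fun t => f (s t) t with hlam_def
  set mu : Fin n → ℂ := fun t => g (s t) t with hmu_def
  set nu : Fin n → ℂ := fun t => h (s t) t with hnu_def
  have hprod : ∀ t, lam t * mu t * nu t = 1 := by
    intro t
    have hk := key (s t) (s t) (s t)
    rw [if_pos ⟨rfl, rfl⟩] at hk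
    rw [← hk]
    symm
    apply Finset.sum_eq_single t
    · intro t' _ ht'
      have : s t ≠ s t' := fun e => ht' (sinj e).symm
      rw [hf0 (s t) t' (by simpa using this)]
      ring
    · simp
  have hfeq : f = permMat σ * Matrix.diagonal lam := by
    ext i t
    rw [Matrix.mul_diagonal]
    show f i t = (if i = σ t then 1 else 0) * lam t
    rcases eq_or_ne i (s t) with rfl | hi
    · rw [if_pos (hσ t).symm, one_mul]
    · rw [if_neg (by rw [hσ t]; exact hi), zero_mul, hf0 i t hi]
  have hgeq : g = permMat σ * Matrix.diagonal mu := by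
    ext i t
    rw [Matrix.mul_diagonal]
    show g i t = (if i = σ t then 1 else 0) * mu t
    rcases eq_or_ne i (s t) with rfl | hi
    · rw [if_pos (hσ t).symm, one_mul]
    · rw [if_neg (by rw [hσ t]; exact hi), zero_mul, hg0 i t hi]
  have hheq : h = permMat σ * Matrix.diagonal nu := by
    ext i t
    rw [Matrix.mul_diagonal]
    show h i t = (if i = σ t then 1 else 0) * nu t
    rcases eq_or_ne i (s t) with rfl | hi
    · rw [if_pos (hσ t).symm, one_mul]
    · rw [if_neg (by rw [hσ t]; exact hi), zero_mul, hh0 i t hi]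
  constructor
  · refine ⟨(σ, lam, mu, nu), ⟨hprod, hfeq, hgeq, hheq⟩, ?_⟩
    rintro ⟨τ, lam', mu', nu'⟩ ⟨hq1', hqf', hqg', hqh'⟩
    have hq1 : ∀ i, lam' i * mu' i * nu' i = 1 := hq1'
    have hqf : f = permMat τ * Matrix.diagonal lam' := hqf'
    have hqg : g = permMat τ * Matrix.diagonal mu' := hqg'
    have hqh : h = permMat τ * Matrix.diagonal nu' := hqh'
    have hlam' : ∀ t, lam' t ≠ 0 := by
      intro t hz
      have h1 := hq1 t
      rw [hz] at h1; simp at h1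
    have hfτ : ∀ i t, f i t = (if i = τ t then 1 else 0) * lam' t := by
      intro i t
      rw [hqf, Matrix.mul_diagonal]; rfl
    have hτs : ∀ t, τ t = s t := by
      intro t
      by_contra hne
      have := hf0 (τ t) t hne
      rw [hfτ (τ t) t, if_pos rfl, one_mul] at this
      exact hlam' t this
    have hτ : τ = σ := Equiv.ext fun t => (hτs t).trans (hσ t).symm
    have hlam'' : lam' = lam := by
      funext t
      have := hfτ (τ t) t
      rw [if_pos rfl, one_mul, hτs t] at this
      exact this.symm
    have hmu'' : mu' = mu := by
      funext t
      have : g (τ t) t = (if (τ t) = τ t then 1 else 0) * mu' t := by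
        rw [hqg, Matrix.mul_diagonal]; rfl
      rw [if_pos rfl, one_mul, hτs t] at this
      exact this.symm
    have hnu'' : nu' = nu := by
      funext t
      have : h (τ t) t = (if (τ t) = τ t then 1 else 0) * nu' t := by
        rw [hqh, Matrix.mul_diagonal]; rfl
      rw [if_pos rfl, one_mul, hτs t] at this
      exact this.symm
    simp [hτ, hlam'', hmu'', hnu'']
  · -- normality
    have conj : ∀ (M : Matrix (Fin n) (Fin n) ℂ), IsUnit M →
        (∀ i t, i ≠ s t → M i t = 0) → ∀ c : Fin n → ℂ,
        M * Matrix.diagonal c * M⁻¹ = Matrix.diagonal (fun i => c (σ.symm i)) := by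
      intro M hM hsupp c
      have comm : M * Matrix.diagonal c = Matrix.diagonal (fun i => c (σ.symm i)) * M := by
        ext i t
        rw [Matrix.mul_diagonal, Matrix.diagonal_mul]
        rcases eq_or_ne i (s t) with rfl | hi
        · have : σ.symm (s t) = t := by
            rw [← hσ t, Equiv.symm_apply_apply]
          rw [this, mul_comm]
        · rw [hsupp i t hi, mul_zero, zero_mul]
      calc M * Matrix.diagonal c * M⁻¹
          = Matrix.diagonal (fun i => c (σ.symm i)) * M * M⁻¹ := by rw [comm]
        _ = Matrix.diagonal (fun i => c (σ.symm i)) * (M * M⁻¹) := by rw [Matrix.mul_assoc]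
        _ = Matrix.diagonal (fun i => c (σ.symm i)) := by
            rw [Matrix.mul_nonsing_inv M ((Matrix.isUnit_iff_isUnit_det M).mp hM), mul_one]
    rintro d₁ d₂ d₃ ⟨a, b, c, hp, rfl, rfl, rfl⟩
    exact ⟨fun i => a (σ.symm i), fun i => b (σ.symm i), fun i => c (σ.symm i),
      fun i => hp (σ.symm i),
      conj f hf hf0 a, conj g hg hg0 b, conj h hh hh0 c⟩
end

section
/- Let c(t) be the one-parameter group of triples of diagonal matrices with entries t^{λ_i}, t^{μ_j}, t^{ν_k} where λ_k = 2^n − 2^{n−k+1} and μ_k = ν_k = 2^{n−k} − 2^{n−1}. Then for every t ≠ 0, c(t) fixes the unit tensor M_⟨1⟩^⊕n, and for every w in the span W of the e_i⊗e_j⊗e_k with min(j,k) < i, the limit as t → 0 of c(t)·w is 0. Consequently W is contained in the nullcone of the stabilizer group of the unit tensor. -/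
open scoped BigOperators

/-- The basis tensor `eᵢ⊗eⱼ⊗e_k`. -/
noncomputable def basisTensor {n : ℕ} (i j k : Fin n) : Fin n → Fin n → Fin n → ℂ :=
  fun a b c => if a = i ∧ b = j ∧ c = k then 1 else 0

/-- The exponent `λ_k = 2ⁿ − 2^{n−k+1}` (with `k = i.val + 1`, i.e. 1-based). -/
def lamExp (n : ℕ) (i : Fin n) : ℤ := 2 ^ n - 2 ^ (n - i.val)

/-- The exponent `μ_k = ν_k = 2^{n−k} − 2^{n−1}` (with `k = i.val + 1`, i.e. 1-based). -/
def muExp (n : ℕ) (i : Fin n) : ℤ := 2 ^ (n - i.val - 1) - 2 ^ (n - 1)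

lemma actT_diag {n : ℕ} (a b c : Fin n → ℂ) (T : Fin n → Fin n → Fin n → ℂ) :
    actT (Matrix.diagonal a) (Matrix.diagonal b) (Matrix.diagonal c) T =
      fun i j k => a i * b j * c k * T i j k := by
  funext i j k
  simp [actT, Matrix.diagonal_apply, ite_mul, Finset.sum_ite_eq, mul_assoc]

lemma actT_add {n : ℕ} (f g h : Matrix (Fin n) (Fin n) ℂ) (x y : Fin n → Fin n → Fin n → ℂ) :
    actT f g h (x + y) = actT f g h x + actT f g h y := by
  funext i j k
  simp [actT, mul_add, Finset.sum_add_distrib]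

lemma actT_smul {n : ℕ} (f g h : Matrix (Fin n) (Fin n) ℂ) (c : ℂ)
    (x : Fin n → Fin n → Fin n → ℂ) :
    actT f g h (c • x) = c • actT f g h x := by
  funext i j k
  simp [actT, Finset.mul_sum, Pi.smul_apply, smul_eq_mul]
  congr 1; funext i'; congr 1; funext j'; congr 1; funext k'; ring

lemma actT_zero {n : ℕ} (f g h : Matrix (Fin n) (Fin n) ℂ) : actT f g h 0 = 0 := by
  funext i j k; simp [actT]

lemma exp_sum_zero (n : ℕ) (i : Fin n) : lamExp n i + muExp n i + muExp n i = 0 := by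
  have h1 : 1 ≤ n - i.val := by omega
  have h2 : n - i.val = (n - i.val - 1) + 1 := (Nat.sub_add_cancel h1).symm
  have h3 : n = (n - 1) + 1 := (Nat.sub_add_cancel (by have := i.2; omega)).symm
  simp only [lamExp, muExp]
  rw [h2]; nth_rewrite 1 [h3]
  push_cast [pow_succ]
  ring

lemma exp_sum_pos (n : ℕ) (i j k : Fin n) (h : min j k < i) :
    0 < lamExp n i + muExp n j + muExp n k := by
  have hn : n = (n - 1) + 1 := (Nat.sub_add_cancel (by have := i.2; omega)).symm
  have key : ∀ a : Fin n, muExp n a = 2 ^ (n - a.val - 1) - 2 ^ (n - 1) := fun _ => rfl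
  have hsum : lamExp n i + muExp n j + muExp n k
      = 2 ^ (n - j.val - 1) + 2 ^ (n - k.val - 1) - 2 ^ (n - i.val) := by
    rw [show lamExp n i = 2 ^ n - 2 ^ (n - i.val) from rfl, key, key]
    nth_rewrite 1 [hn]
    push_cast [pow_succ]
    ring
  rw [hsum]
  rcases min_cases j k with ⟨hm, _⟩ | ⟨hm, _⟩ <;> rw [hm] at h
  · have hj : j.val < i.val := h
    have h2 : (2:ℤ) ^ (n - i.val) ≤ 2 ^ (n - j.val - 1) :=
      pow_le_pow_right₀ one_le_two (by omega)
    have h3 : (0:ℤ) < 2 ^ (n - k.val - 1) := by positivity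
    omega
  · have hk : k.val < i.val := h
    have h2 : (2:ℤ) ^ (n - i.val) ≤ 2 ^ (n - k.val - 1) :=
      pow_le_pow_right₀ one_le_two (by omega)
    have h3 : (0:ℤ) < 2 ^ (n - j.val - 1) := by positivity
    omega

/-- The one-parameter group `c(t) = (diag(t^{λᵢ}), diag(t^{μⱼ}), diag(t^{ν_k}))`:
for `t ≠ 0` it fixes the unit tensor, it drives every `w ∈ W` to `0` as `t → 0`,
and hence `W` is contained in the nullcone of the stabilizer of the unit tensor. -/
theorem oneParam_drives_W_to_zero (n : ℕ) :
    (∀ t : ℂ, t ≠ 0 →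
      actT (Matrix.diagonal fun i => t ^ lamExp n i)
        (Matrix.diagonal fun j => t ^ muExp n j)
        (Matrix.diagonal fun k => t ^ muExp n k) (unitTensor n) = unitTensor n) ∧
    (∀ w ∈ Submodule.span ℂ
        {T : Fin n → Fin n → Fin n → ℂ | ∃ i j k : Fin n, min j k < i ∧ T = basisTensor i j k},
      Filter.Tendsto
        (fun t : ℂ =>
          actT (Matrix.diagonal fun i => t ^ lamExp n i)
            (Matrix.diagonal fun j => t ^ muExp n j)
            (Matrix.diagonal fun k => t ^ muExp n k) w)
        (nhdsWithin 0 {0}ᶜ) (nhds 0)) ∧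
    (∀ w ∈ Submodule.span ℂ
        {T : Fin n → Fin n → Fin n → ℂ | ∃ i j k : Fin n, min j k < i ∧ T = basisTensor i j k},
      (0 : Fin n → Fin n → Fin n → ℂ) ∈
        closure {v | ∃ f g h : Matrix (Fin n) (Fin n) ℂ, IsUnit f ∧ IsUnit g ∧ IsUnit h ∧
          actT f g h (unitTensor n) = unitTensor n ∧ v = actT f g h w}) := by
  have hfix : ∀ t : ℂ, t ≠ 0 →
      actT (Matrix.diagonal fun i => t ^ lamExp n i)
        (Matrix.diagonal fun j => t ^ muExp n j)
        (Matrix.diagonal fun k => t ^ muExp n k) (unitTensor n) = unitTensor n := by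
    intro t ht
    rw [actT_diag]
    funext i j k
    simp only [unitTensor]
    split_ifs with hc
    · obtain ⟨hij, hjk⟩ := hc
      subst hij; subst hjk
      rw [mul_one, ← zpow_add₀ ht, ← zpow_add₀ ht, exp_sum_zero, zpow_zero]
    · rw [mul_zero]
  have htend : ∀ w ∈ Submodule.span ℂ
      {T : Fin n → Fin n → Fin n → ℂ | ∃ i j k : Fin n, min j k < i ∧ T = basisTensor i j k},
      Filter.Tendsto
        (fun t : ℂ =>
          actT (Matrix.diagonal fun i => t ^ lamExp n i)
            (Matrix.diagonal fun j => t ^ muExp n j)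
            (Matrix.diagonal fun k => t ^ muExp n k) w)
        (nhdsWithin 0 {0}ᶜ) (nhds 0) := by
    intro w hw
    induction hw using Submodule.span_induction with
    | mem x hx =>
        obtain ⟨i, j, k, hlt, rfl⟩ := hx
        simp only [actT_diag]
        rw [tendsto_pi_nhds]; intro a
        rw [tendsto_pi_nhds]; intro b
        rw [tendsto_pi_nhds]; intro c
        simp only [basisTensor, Pi.zero_apply]
        split_ifs with hc
        · obtain ⟨rfl, rfl, rfl⟩ := hc
          set e : ℤ := lamExp n a + muExp n b + muExp n c with he
          have hepos : 0 < e := exp_sum_pos n a b c hlt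
          have hmain : Filter.Tendsto (fun t : ℂ => t ^ e.toNat)
              (nhdsWithin 0 {0}ᶜ) (nhds 0) := by
            have := (continuous_pow e.toNat (M := ℂ)).tendsto 0
            rw [zero_pow (by omega : e.toNat ≠ 0)] at this
            exact this.mono_left nhdsWithin_le_nhds
          refine hmain.congr' ?_
          filter_upwards [self_mem_nhdsWithin] with t ht
          have ht0 : t ≠ 0 := ht
          rw [mul_one, ← zpow_add₀ ht0, ← zpow_add₀ ht0, ← he,
            ← zpow_natCast t e.toNat, Int.toNat_of_nonneg hepos.le]
        · simp only [mul_zero]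
          exact tendsto_const_nhds
    | zero => simp only [actT_zero]; exact tendsto_const_nhds
    | add x y _ _ hx hy =>
        simp only [actT_add]
        have := hx.add hy
        simpa using this
    | smul c x _ hx =>
        simp only [actT_smul]
        have := hx.const_smul c
        simpa using this
  refine ⟨hfix, htend, ?_⟩
  intro w hw
  refine mem_closure_of_tendsto (htend w hw) ?_
  filter_upwards [self_mem_nhdsWithin] with t ht
  have ht0 : t ≠ 0 := ht
  have hu : ∀ v : Fin n → ℤ, IsUnit (Matrix.diagonal fun i => t ^ v i) := by
    intro v
    rw [Matrix.isUnit_iff_isUnit_det, Matrix.det_diagonal]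
    exact (Finset.prod_ne_zero_iff.2 fun i _ => zpow_ne_zero _ ht0).isUnit
  exact ⟨_, _, _, hu _, hu _, hu _, hfix t ht0, rfl⟩
end

section
/- Let W be the span of the e_i⊗e_j⊗e_k with min(j,k) < i, and let g' be the set of triples (x,y,z) ∈ gl_n(ℂ)³ such that for all w ∈ W, the derivation action (x,y,z).(M_⟨1⟩^⊕n + w) lies in the span of M_⟨1⟩^⊕n and W. Then every (x,y,z) ∈ g' has x lower triangular, y and z upper triangular, and satisfies x_{σσ}+y_{σσ}+z_{σσ} = x_{11}+y_{11}+z_{11} for all σ; consequently dim g' = (3n²+n−2)/2 + 2 as a subspace of gl_n(ℂ)³ (i.e., its image modulo the 2-dimensional kernel of the action has dimension (3n²+n−2)/2). -/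
open scoped BigOperators

/-- The subspace `W` spanned by the `eᵢ⊗eⱼ⊗e_k` with `min(j,k) < i`. -/
noncomputable def Wspace (n : ℕ) : Submodule ℂ (Fin n → Fin n → Fin n → ℂ) :=
  Submodule.span ℂ {T | ∃ i j k : Fin n, min j k < i ∧ T = basisTensor i j k}

/-- The Lie algebra `g'` of triples `(x,y,z)` with
`(x,y,z).(M⟨1⟩^⊕n + w) ∈ ⟨M⟨1⟩^⊕n, W⟩` for all `w ∈ W`. -/
noncomputable def gPrime (n : ℕ) :
    Submodule ℂ (Matrix (Fin n) (Fin n) ℂ × Matrix (Fin n) (Fin n) ℂ × Matrix (Fin n) (Fin n) ℂ) where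
  carrier := {p | ∀ w ∈ Wspace n,
    lieAct p.1 p.2.1 p.2.2 (unitTensor n + w) ∈ Submodule.span ℂ {unitTensor n} ⊔ Wspace n}
  add_mem' := by
    intro a b ha hb w hw
    have key : lieAct (a + b).1 (a + b).2.1 (a + b).2.2 (unitTensor n + w)
        = lieAct a.1 a.2.1 a.2.2 (unitTensor n + w)
          + lieAct b.1 b.2.1 b.2.2 (unitTensor n + w) := by
      funext i j k
      simp only [lieAct, Prod.fst_add, Prod.snd_add, Matrix.add_apply, Pi.add_apply,
        add_mul, Finset.sum_add_distrib]
      ring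
    rw [key]
    exact Submodule.add_mem _ (ha w hw) (hb w hw)
  zero_mem' := by
    intro w hw
    have key : lieAct (0 : Matrix (Fin n) (Fin n) ℂ × Matrix (Fin n) (Fin n) ℂ × Matrix (Fin n) (Fin n) ℂ).1
        (0 : Matrix (Fin n) (Fin n) ℂ × Matrix (Fin n) (Fin n) ℂ × Matrix (Fin n) (Fin n) ℂ).2.1
        (0 : Matrix (Fin n) (Fin n) ℂ × Matrix (Fin n) (Fin n) ℂ × Matrix (Fin n) (Fin n) ℂ).2.2
        (unitTensor n + w) = 0 := by
      funext i j k
      show (∑ l, (0 : Matrix (Fin n) (Fin n) ℂ) i l * _) + (∑ l, (0 : Matrix (Fin n) (Fin n) ℂ) j l * _)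
          + (∑ l, (0 : Matrix (Fin n) (Fin n) ℂ) k l * _) = 0
      simp
    rw [key]
    exact Submodule.zero_mem _
  smul_mem' := by
    intro c a ha w hw
    have key : lieAct (c • a.1) (c • a.2.1) (c • a.2.2) (unitTensor n + w)
        = c • lieAct a.1 a.2.1 a.2.2 (unitTensor n + w) := by
      funext i j k
      simp only [lieAct, Matrix.smul_apply, Pi.smul_apply, smul_eq_mul, Finset.mul_sum,
        mul_add]
      ring
    rw [Set.mem_setOf_eq] at ha
    simpa [key] using Submodule.smul_mem _ c (ha w hw)


/-! ### Auxiliary lemmas -/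

section Aux

open Finset

lemma lieAct_unit {n : ℕ} (x y z : Matrix (Fin n) (Fin n) ℂ) (i j k : Fin n) :
    lieAct x y z (unitTensor n) i j k =
      (if j = k then x i j else 0) + (if i = k then y j i else 0) + (if i = j then z k j else 0) := by
  simp [lieAct, unitTensor, ite_and, mul_ite, Finset.sum_ite_eq, Finset.sum_ite_eq', eq_comm]

lemma tensor_expand {n : ℕ} (T : Fin n → Fin n → Fin n → ℂ) :
    T = ∑ i : Fin n, ∑ j : Fin n, ∑ k : Fin n, T i j k • basisTensor i j k := by
  funext a b c
  simp [basisTensor, ite_and, Finset.sum_apply, Pi.smul_apply, smul_eq_mul, mul_ite,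
    Finset.sum_ite_eq, Finset.sum_ite_eq']

lemma mem_W_iff {n : ℕ} (T : Fin n → Fin n → Fin n → ℂ) :
    T ∈ Wspace n ↔ ∀ i j k : Fin n, i ≤ j → i ≤ k → T i j k = 0 := by
  constructor
  · intro hT
    induction hT using Submodule.span_induction with
    | mem x hx =>
      obtain ⟨i', j', k', hlt, rfl⟩ := hx
      intro i j k hij hik
      simp only [basisTensor, ite_eq_right_iff, and_imp]
      rintro rfl rfl rfl
      exact absurd hlt (not_lt.2 (le_min hij hik)).elim
    | zero => intro i j k _ _; rfl
    | add u v _ _ hu hv =>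
      intro i j k hij hik
      simp [Pi.add_apply, hu i j k hij hik, hv i j k hij hik]
    | smul c u _ hu => intro i j k hij hik; simp [Pi.smul_apply, hu i j k hij hik]
  · intro h
    rw [tensor_expand T]
    apply Submodule.sum_mem; intro i _
    apply Submodule.sum_mem; intro j _
    apply Submodule.sum_mem; intro k _
    rcases le_or_gt i (min j k) with hle | hlt
    · have : T i j k = 0 := h i j k (hle.trans (min_le_left _ _)) (hle.trans (min_le_right _ _))
      simp [this]
    · exact Submodule.smul_mem _ _ (Submodule.subset_span ⟨i, j, k, hlt, rfl⟩)

lemma mem_S_iff {n : ℕ} (T : Fin n → Fin n → Fin n → ℂ) :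
    T ∈ Submodule.span ℂ {unitTensor n} ⊔ Wspace n ↔
      ∃ c : ℂ, ∀ i j k : Fin n, i ≤ j → i ≤ k →
        T i j k = if i = j ∧ j = k then c else 0 := by
  rw [Submodule.mem_sup]
  constructor
  · rintro ⟨u, hu, w, hw, rfl⟩
    obtain ⟨c, rfl⟩ := Submodule.mem_span_singleton.1 hu
    refine ⟨c, fun i j k hij hik => ?_⟩
    have hw' := (mem_W_iff w).1 hw i j k hij hik
    simp [unitTensor, hw', mul_ite]
  · rintro ⟨c, hc⟩
    refine ⟨c • unitTensor n, Submodule.mem_span_singleton.2 ⟨c, rfl⟩,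
      T - c • unitTensor n, (mem_W_iff _).2 fun i j k hij hik => ?_, by abel⟩
    have := hc i j k hij hik
    simp only [Pi.sub_apply, Pi.smul_apply, unitTensor, smul_eq_mul, this]
    split <;> simp

lemma lieAct_add {n : ℕ} (x y z : Matrix (Fin n) (Fin n) ℂ) (S T : Fin n → Fin n → Fin n → ℂ) :
    lieAct x y z (S + T) = lieAct x y z S + lieAct x y z T := by
  funext i j k
  simp only [lieAct, Pi.add_apply, mul_add, Finset.sum_add_distrib]
  ring

/-- The triple type. -/
abbrev Trip (n : ℕ) := Matrix (Fin n) (Fin n) ℂ × Matrix (Fin n) (Fin n) ℂ × Matrix (Fin n) (Fin n) ℂ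

/-- The structural predicate. -/
def isGood {n : ℕ} (p : Trip n) : Prop :=
  (∀ σ ρ : Fin n, σ < ρ → p.1 σ ρ = 0) ∧
  (∀ σ ρ : Fin n, ρ < σ → p.2.1 σ ρ = 0) ∧
  (∀ σ ρ : Fin n, ρ < σ → p.2.2 σ ρ = 0) ∧
  (∀ σ τ : Fin n, p.1 σ σ + p.2.1 σ σ + p.2.2 σ σ = p.1 τ τ + p.2.1 τ τ + p.2.2 τ τ)

lemma mem_gp_iff {n : ℕ} (hn : 1 ≤ n) (p : Trip n) :
    (∀ w ∈ Wspace n,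
      lieAct p.1 p.2.1 p.2.2 (unitTensor n + w) ∈ Submodule.span ℂ {unitTensor n} ⊔ Wspace n)
    ↔ isGood p := by
  obtain ⟨x, y, z⟩ := p
  simp only [isGood]
  constructor
  · intro h
    obtain ⟨c, hc⟩ := (mem_S_iff _).1 (by simpa using h 0 (Submodule.zero_mem _))
    have key : ∀ i j k : Fin n, i ≤ j → i ≤ k →
        (if j = k then x i j else 0) + (if i = k then y j i else 0) + (if i = j then z k j else 0)
          = if i = j ∧ j = k then c else 0 := by
      intro i j k hij hik; rw [← lieAct_unit]; exact hc i j k hij hik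
    refine ⟨?_, ?_, ?_, ?_⟩
    · intro σ ρ hlt
      have := key σ ρ ρ hlt.le hlt.le
      simpa [hlt.ne, (hlt.ne : ¬ σ = ρ)] using this
    · intro σ ρ hlt
      have := key ρ σ ρ hlt.le (le_refl ρ)
      simpa [hlt.ne, hlt.ne'] using this
    · intro σ ρ hlt
      have := key ρ ρ σ (le_refl ρ) hlt.le
      simpa [hlt.ne, hlt.ne'] using this
    · intro σ τ
      have h1 := key σ σ σ le_rfl le_rfl
      have h2 := key τ τ τ le_rfl le_rfl
      simp only [if_pos rfl, and_self, if_true] at h1 h2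
      rw [h1, h2]
  · rintro ⟨hx, hy, hz, hd⟩ w hw
    rw [lieAct_add]
    apply Submodule.add_mem
    · rw [mem_S_iff]
      refine ⟨x ⟨0, hn⟩ ⟨0, hn⟩ + y ⟨0, hn⟩ ⟨0, hn⟩ + z ⟨0, hn⟩ ⟨0, hn⟩, ?_⟩
      intro i j k hij hik
      rw [lieAct_unit]
      by_cases hijk : i = j ∧ j = k
      · obtain ⟨rfl, rfl⟩ := hijk
        simpa using hd i ⟨0, hn⟩
      · rw [if_neg hijk]
        have t1 : (if j = k then x i j else 0) = 0 := by
          split_ifs with h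
          · exact hx i j (lt_of_le_of_ne hij fun e => hijk ⟨e, h⟩)
          · rfl
        have t2 : (if i = k then y j i else 0) = 0 := by
          split_ifs with h
          · exact hy j i (lt_of_le_of_ne hij fun e => hijk ⟨e, e.symm.trans h⟩)
          · rfl
        have t3 : (if i = j then z k j else 0) = 0 := by
          split_ifs with h
          · subst h
            exact hz k i (lt_of_le_of_ne hik fun e => hijk ⟨rfl, e⟩)
          · rfl
        rw [t1, t2, t3]; ring
    · apply Submodule.mem_sup_right
      rw [mem_W_iff]
      intro a b c hab hac
      have hw' := (mem_W_iff w).1 hw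
      show (∑ l, x a l * w l b c) + (∑ l, y b l * w a l c) + (∑ l, z c l * w a b l) = 0
      have e1 : ∀ l : Fin n, x a l * w l b c = 0 := by
        intro l
        rcases le_or_gt l a with h | h
        · rw [hw' l b c (h.trans hab) (h.trans hac), mul_zero]
        · rw [hx a l h, zero_mul]
      have e2 : ∀ l : Fin n, y b l * w a l c = 0 := by
        intro l
        rcases le_or_gt b l with h | h
        · rw [hw' a l c (hab.trans h) hac, mul_zero]
        · rw [hy b l h, zero_mul]
      have e3 : ∀ l : Fin n, z c l * w a b l = 0 := by
        intro l
        rcases le_or_gt c l with h | h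
        · rw [hw' a b l hab (hac.trans h), mul_zero]
        · rw [hz c l h, zero_mul]
      simp [e1, e2, e3]

/-- The submodule defined by the structural conditions. -/
noncomputable def Qsub (n : ℕ) : Submodule ℂ (Trip n) where
  carrier := {p | isGood p}
  add_mem' := by
    rintro a b ⟨ha1, ha2, ha3, ha4⟩ ⟨hb1, hb2, hb3, hb4⟩
    refine ⟨fun σ ρ h => ?_, fun σ ρ h => ?_, fun σ ρ h => ?_, fun σ τ => ?_⟩
    · simp [ha1 σ ρ h, hb1 σ ρ h]
    · simp [ha2 σ ρ h, hb2 σ ρ h]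
    · simp [ha3 σ ρ h, hb3 σ ρ h]
    · simp only [Prod.fst_add, Prod.snd_add, Matrix.add_apply]
      linear_combination ha4 σ τ + hb4 σ τ
  zero_mem' := ⟨fun _ _ _ => rfl, fun _ _ _ => rfl, fun _ _ _ => rfl, fun _ _ => rfl⟩
  smul_mem' := by
    rintro c a ⟨ha1, ha2, ha3, ha4⟩
    refine ⟨fun σ ρ h => ?_, fun σ ρ h => ?_, fun σ ρ h => ?_, fun σ τ => ?_⟩
    · simp [ha1 σ ρ h]
    · simp [ha2 σ ρ h]
    · simp [ha3 σ ρ h]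
    · simp only [Prod.smul_fst, Prod.smul_snd, Matrix.smul_apply, smul_eq_mul]
      rw [← mul_add, ← mul_add, ← mul_add, ← mul_add, ha4 σ τ]

/-- The parameter space. -/
abbrev Param (n : ℕ) := ({p : Fin n × Fin n // p.2 ≤ p.1} → ℂ) ×
  (({p : Fin n × Fin n // p.1 ≤ p.2} → ℂ) × (({p : Fin n × Fin n // p.1 < p.2} → ℂ) × ℂ))

noncomputable def Phi (n : ℕ) (hn : 1 ≤ n) : Trip n →ₗ[ℂ] Param n where
  toFun p := (fun s => p.1 s.1.1 s.1.2, fun s => p.2.1 s.1.1 s.1.2, fun s => p.2.2 s.1.1 s.1.2,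
    p.1 ⟨0, hn⟩ ⟨0, hn⟩ + p.2.1 ⟨0, hn⟩ ⟨0, hn⟩ + p.2.2 ⟨0, hn⟩ ⟨0, hn⟩)
  map_add' a b := by
    refine Prod.ext rfl (Prod.ext rfl (Prod.ext rfl ?_))
    show (a + b).1 _ _ + (a + b).2.1 _ _ + (a + b).2.2 _ _ = (_ + _ : ℂ)
    simp only [Prod.fst_add, Prod.snd_add, Matrix.add_apply]
    ring
  map_smul' c a := by
    refine Prod.ext rfl (Prod.ext rfl (Prod.ext rfl ?_))
    show (c • a).1 _ _ + (c • a).2.1 _ _ + (c • a).2.2 _ _ = (c • (_ + _ + _ : ℂ))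
    simp only [Prod.smul_fst, Prod.smul_snd, Matrix.smul_apply, smul_eq_mul]
    ring

lemma Phi_inj (n : ℕ) (hn : 1 ≤ n) :
    Function.Injective ((Phi n hn).comp (Qsub n).subtype) := by
  rw [← LinearMap.ker_eq_bot, LinearMap.ker_eq_bot']
  rintro ⟨⟨x, y, z⟩, hx1, hy1, hz1, hd⟩ h
  have h1 : ∀ s : {p : Fin n × Fin n // p.2 ≤ p.1}, x s.1.1 s.1.2 = 0 :=
    fun s => congrFun (congrArg Prod.fst h) s
  have h2 : ∀ s : {p : Fin n × Fin n // p.1 ≤ p.2}, y s.1.1 s.1.2 = 0 :=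
    fun s => congrFun (congrArg (fun q => q.2.1) h) s
  have h3 : ∀ s : {p : Fin n × Fin n // p.1 < p.2}, z s.1.1 s.1.2 = 0 :=
    fun s => congrFun (congrArg (fun q => q.2.2.1) h) s
  have h4 : x ⟨0, hn⟩ ⟨0, hn⟩ + y ⟨0, hn⟩ ⟨0, hn⟩ + z ⟨0, hn⟩ ⟨0, hn⟩ = 0 :=
    congrArg (fun q => q.2.2.2) h
  have hx0 : x = 0 := by
    funext σ ρ
    rcases le_or_gt ρ σ with hle | hlt
    · exact h1 ⟨(σ, ρ), hle⟩
    · exact hx1 σ ρ hlt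
  have hy0 : y = 0 := by
    funext σ ρ
    rcases le_or_gt σ ρ with hle | hlt
    · exact h2 ⟨(σ, ρ), hle⟩
    · exact hy1 σ ρ hlt
  have hz0 : z = 0 := by
    funext σ ρ
    rcases lt_trichotomy σ ρ with hlt | heq | hgt
    · exact h3 ⟨(σ, ρ), hlt⟩
    · subst heq
      have hD := hd σ ⟨0, hn⟩
      simp only [hx0, hy0, Matrix.zero_apply, zero_add] at hD h4
      simp [hD, h4]
    · exact hz1 σ ρ hgt
  ext : 1
  exact Prod.ext hx0 (Prod.ext hy0 hz0)

lemma Phi_surj (n : ℕ) (hn : 1 ≤ n) :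
    Function.Surjective ((Phi n hn).comp (Qsub n).subtype) := by
  rintro ⟨f, g, h, s⟩
  classical
  set x : Matrix (Fin n) (Fin n) ℂ := fun σ ρ => if h' : ρ ≤ σ then f ⟨(σ, ρ), h'⟩ else 0 with hxdef
  set y : Matrix (Fin n) (Fin n) ℂ := fun σ ρ => if h' : σ ≤ ρ then g ⟨(σ, ρ), h'⟩ else 0 with hydef
  set z : Matrix (Fin n) (Fin n) ℂ := fun σ ρ =>
    if h' : σ < ρ then h ⟨(σ, ρ), h'⟩ else if σ = ρ then s - x σ σ - y σ σ else 0 with hzdef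
  have hzd : ∀ σ : Fin n, z σ σ = s - x σ σ - y σ σ := by
    intro σ; simp [hzdef]
  refine ⟨⟨(x, y, z), ?_, ?_, ?_, ?_⟩, ?_⟩
  · intro σ ρ hlt
    simp only [hxdef]
    rw [dif_neg (not_le.2 hlt)]
  · intro σ ρ hlt
    simp only [hydef]
    rw [dif_neg (not_le.2 hlt)]
  · intro σ ρ hlt
    simp only [hzdef]
    rw [dif_neg (asymm hlt), if_neg hlt.ne']
  · intro σ τ
    simp only [hzd]
    ring
  · refine Prod.ext ?_ (Prod.ext ?_ (Prod.ext ?_ ?_))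
    · funext t
      obtain ⟨⟨σ, ρ⟩, ht⟩ := t
      show x σ ρ = f _
      simp [hxdef, dif_pos ht]
    · funext t
      obtain ⟨⟨σ, ρ⟩, ht⟩ := t
      show y σ ρ = g _
      simp [hydef, dif_pos ht]
    · funext t
      obtain ⟨⟨σ, ρ⟩, ht⟩ := t
      show z σ ρ = h _
      simp [hzdef, dif_pos ht]
    · show x _ _ + y _ _ + z _ _ = s
      rw [hzd]; ring

lemma card_le_fin (n : ℕ) (σ : Fin n) : Fintype.card {ρ : Fin n // ρ ≤ σ} = σ + 1 := by
  rw [Fintype.card_subtype]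
  have : Finset.filter (fun ρ => ρ ≤ σ) Finset.univ = Finset.Iic σ := by ext ρ; simp
  rw [this, Fin.card_Iic]

lemma card_lt_fin (n : ℕ) (σ : Fin n) : Fintype.card {ρ : Fin n // ρ < σ} = σ := by
  rw [Fintype.card_subtype]
  have : Finset.filter (fun ρ => ρ < σ) Finset.univ = Finset.Iio σ := by ext ρ; simp
  rw [this, Fin.card_Iio]

lemma card_pairs_le (n : ℕ) :
    Fintype.card {p : Fin n × Fin n // p.2 ≤ p.1} = n + n * (n - 1) / 2 := by
  rw [Fintype.card_congr (Equiv.subtypeProdEquivSigmaSubtype fun a b : Fin n => b ≤ a),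
    Fintype.card_sigma]
  simp only [card_le_fin]
  rw [Fin.sum_univ_eq_sum_range (fun i => i + 1) n, Finset.sum_add_distrib, Finset.sum_range_id]
  simp [add_comm]

lemma card_pairs_le' (n : ℕ) :
    Fintype.card {p : Fin n × Fin n // p.1 ≤ p.2} = n + n * (n - 1) / 2 := by
  rw [← card_pairs_le n]
  apply Fintype.card_congr
  exact ⟨fun s => ⟨s.1.swap, s.2⟩, fun s => ⟨s.1.swap, s.2⟩,
    fun s => by ext : 1; simp, fun s => by ext : 1; simp⟩

lemma card_pairs_lt (n : ℕ) :
    Fintype.card {p : Fin n × Fin n // p.1 < p.2} = n * (n - 1) / 2 := by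
  have : Fintype.card {p : Fin n × Fin n // p.1 < p.2}
      = Fintype.card {p : Fin n × Fin n // p.2 < p.1} :=
    Fintype.card_congr ⟨fun s => ⟨s.1.swap, s.2⟩, fun s => ⟨s.1.swap, s.2⟩,
      fun s => by ext : 1; simp, fun s => by ext : 1; simp⟩
  rw [this, Fintype.card_congr (Equiv.subtypeProdEquivSigmaSubtype fun a b : Fin n => b < a),
    Fintype.card_sigma]
  simp only [card_lt_fin]
  rw [Fin.sum_univ_eq_sum_range (fun i => i) n, Finset.sum_range_id]

end Aux

/-- Every `(x,y,z) ∈ g'` has `x` lower triangular, `y, z` upper triangular, and constant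
diagonal sums; consequently `dim g' = (3n²+n−2)/2 + 2` (inside `gl_n³`, before quotienting by
the 2-dimensional kernel of the action). -/

theorem gPrime_structure {n : ℕ} (hn : 1 ≤ n) :
    (∀ p ∈ gPrime n,
      (∀ σ ρ : Fin n, σ < ρ → p.1 σ ρ = 0) ∧
      (∀ σ ρ : Fin n, ρ < σ → p.2.1 σ ρ = 0) ∧
      (∀ σ ρ : Fin n, ρ < σ → p.2.2 σ ρ = 0) ∧
      (∀ σ : Fin n, p.1 σ σ + p.2.1 σ σ + p.2.2 σ σ
        = p.1 ⟨0, hn⟩ ⟨0, hn⟩ + p.2.1 ⟨0, hn⟩ ⟨0, hn⟩ + p.2.2 ⟨0, hn⟩ ⟨0, hn⟩)) ∧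
    Module.finrank ℂ (gPrime n) = (3 * n ^ 2 + n - 2) / 2 + 2 := by
  constructor
  · intro p hp
    have hg : isGood p := (mem_gp_iff hn p).1 hp
    exact ⟨hg.1, hg.2.1, hg.2.2.1, fun σ => hg.2.2.2 σ ⟨0, hn⟩⟩
  · have hQ : gPrime n = Qsub n := by
      ext p
      exact mem_gp_iff hn p
    rw [hQ]
    have e : (Qsub n) ≃ₗ[ℂ] Param n :=
      LinearEquiv.ofBijective ((Phi n hn).comp (Qsub n).subtype) ⟨Phi_inj n hn, Phi_surj n hn⟩
    rw [e.finrank_eq, Module.finrank_prod, Module.finrank_prod, Module.finrank_prod,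
      Module.finrank_pi, Module.finrank_pi, Module.finrank_pi, Module.finrank_self,
      card_pairs_le, card_pairs_le', card_pairs_lt]
    have heven : Even (n * (n - 1)) := by
      rw [mul_comm]
      have := Nat.even_mul_succ_self (n - 1)
      rwa [Nat.sub_add_cancel hn] at this
    have h2t : n * (n - 1) / 2 * 2 = n * (n - 1) := Nat.div_mul_cancel heven.two_dvd
    have hm : n * (n - 1) = n * n - n := by rw [Nat.mul_sub, mul_one]
    have hle : n ≤ n * n := Nat.le_mul_of_pos_left n hn
    rw [pow_two]
    generalize hmm : n * n = m at *
    omega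
end
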